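/- For any simplicial complex K (with a linear order on its vertex set), the prism K ⊠ Δ¹ collapses onto K ⊠ {2}; in particular |K ⊠ {2}| is a deformation retract of |K ⊠ Δ¹|. -/

import Mathlib

open Finset

/-- A facet is a maximal face. -/
def IsFacet {υ : Type*} (K : Set (Finset υ)) (F : Finset υ) : Prop :=
  F ∈ K ∧ ∀ σ ∈ K, F ⊆ σ → σ = F

/-- A free face: a non-empty face which is not a facet and is contained in exactly one
facet. -/
def IsFreeFace {υ : Type*} (K : Set (Finset υ)) (σ : Finset υ) : Prop :=
  σ ∈ K ∧ σ ≠ ∅ ∧ ¬ IsFacet K σ ∧ ∃! F, IsFacet K F ∧ σ ⊆ F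

/-- An elementary collapse removes a free face together with all faces containing it. -/
def ElemCollapse {υ : Type*} (K K' : Set (Finset υ)) : Prop :=
  ∃ σ, IsFreeFace K σ ∧ K' = {τ ∈ K | ¬ σ ⊆ τ}

/-- `K` collapses onto `K'` if a sequence of elementary collapses leads from `K` to
`K'`. -/
def Collapses {υ : Type*} (K K' : Set (Finset υ)) : Prop :=
  Relation.ReflTransGen ElemCollapse K K'

/-- The ordered simplicial product `K ⊠ L`: faces are the sets of pairs which are
chains in the componentwise order and whose two projections are faces of `K` and of
`L` respectively. -/
def boxProd {ι κ : Type*} [DecidableEq ι] [DecidableEq κ] [Preorder ι] [Preorder κ]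
    (K : Set (Finset ι)) (L : Set (Finset κ)) : Set (Finset (ι × κ)) :=
  {S | S.image Prod.fst ∈ K ∧ S.image Prod.snd ∈ L ∧
    ∀ p ∈ S, ∀ q ∈ S, (p.1 ≤ q.1 ∧ p.2 ≤ q.2) ∨ (q.1 ≤ p.1 ∧ q.2 ≤ p.2)}

/-- The geometric realization `|K| ⊆ ℝ^{V}` of a simplicial complex `K`. -/
def geomReal {υ : Type*} (K : Set (Finset υ)) : Set (υ → ℝ) :=
  {f | (∀ v, 0 ≤ f v) ∧ ∃ σ ∈ K, (∀ v, v ∉ σ → f v = 0) ∧ ∑ v ∈ σ, f v = 1}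

/-! ### Auxiliary material for the collapse -/

open scoped Classical

namespace BoxAux

variable {ι : Type*} [LinearOrder ι]

/-- Is a chain in the componentwise order. -/
def Chn (S : Finset (ι × Fin 2)) : Prop :=
  ∀ p ∈ S, ∀ q ∈ S, (p.1 ≤ q.1 ∧ p.2 ≤ q.2) ∨ (q.1 ≤ p.1 ∧ q.2 ≤ p.2)

lemma mem_boxProd_univ {K : Set (Finset ι)} {S : Finset (ι × Fin 2)} :
    S ∈ boxProd K (Set.univ : Set (Finset (Fin 2))) ↔ S.image Prod.fst ∈ K ∧ Chn S := by
  simp [boxProd, Chn]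

lemma fin2 (e : Fin 2) : e = 0 ∨ e = 1 := by omega

lemma chain_cmp {C : Finset (ι × Fin 2)} (hC : Chn C) {a b : ι}
    (hb : (b, 0) ∈ C) (ha : (a, 1) ∈ C) : b ≤ a := by
  rcases hC _ ha _ hb with ⟨h1, h2⟩ | ⟨h1, h2⟩
  · simp at h2
  · exact h1

lemma doubled_unique {C : Finset (ι × Fin 2)} (hC : Chn C) {x y : ι}
    (hx0 : (x, 0) ∈ C) (hx1 : (x, 1) ∈ C) (hy0 : (y, 0) ∈ C) (hy1 : (y, 1) ∈ C) :
    x = y :=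
  le_antisymm (chain_cmp hC hx0 hy1) (chain_cmp hC hy0 hx1)

/-- remove the top `(m,1)` vertex (for chains, the unique doubled vertex's `1`-copy). -/
def lowF (S : Finset (ι × Fin 2)) : Finset (ι × Fin 2) :=
  S.filter (fun p => ¬(p.2 = 1 ∧ (p.1, 0) ∈ S))

def IsLower (S : Finset (ι × Fin 2)) : Prop :=
  (∃ p ∈ S, p.2 = 0) ∧ ∀ x : ι, ¬((x, 0) ∈ S ∧ (x, 1) ∈ S)

def μ (S : Finset (ι × Fin 2)) : ℕ := S.card + (S.filter (fun p => p.2 = 0)).card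

lemma lowF_subset (S : Finset (ι × Fin 2)) : lowF S ⊆ S := filter_subset _ _

lemma zeros_lowF (S : Finset (ι × Fin 2)) :
    (lowF S).filter (fun p => p.2 = 0) = S.filter (fun p => p.2 = 0) := by
  ext p
  simp only [lowF, mem_filter]
  constructor
  · rintro ⟨⟨h1, _⟩, h2⟩; exact ⟨h1, h2⟩
  · rintro ⟨h1, h2⟩
    refine ⟨⟨h1, ?_⟩, h2⟩
    rintro ⟨he, -⟩
    rw [h2] at he; exact absurd he (by decide)

lemma lowF_eq_of_not_doubled {C : Finset (ι × Fin 2)}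
    (h : ∀ x : ι, ¬((x, 0) ∈ C ∧ (x, 1) ∈ C)) : lowF C = C := by
  apply filter_true_of_mem
  rintro p hp ⟨he, h0⟩
  exact h p.1 ⟨h0, by rwa [← he, Prod.mk.eta]⟩

lemma lowF_eq_erase {C : Finset (ι × Fin 2)} (hC : Chn C) {x : ι}
    (hx0 : (x, 0) ∈ C) (hx1 : (x, 1) ∈ C) : lowF C = C.erase (x, 1) := by
  ext q
  simp only [lowF, mem_filter, mem_erase]
  constructor
  · rintro ⟨hq, hq2⟩
    refine ⟨?_, hq⟩
    rintro rfl
    exact hq2 ⟨rfl, hx0⟩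
  · rintro ⟨hne, hq⟩
    refine ⟨hq, ?_⟩
    rintro ⟨he, h0⟩
    have : q.1 = x := doubled_unique hC h0 (by rwa [← he, Prod.mk.eta]) hx0 hx1
    exact hne (by rw [← Prod.mk.eta (p := q), this, he])

lemma lowF_isLower {C : Finset (ι × Fin 2)} (hz : ∃ p ∈ C, p.2 = 0) :
    IsLower (lowF C) := by
  constructor
  · obtain ⟨p, hp, hp2⟩ := hz
    refine ⟨p, ?_, hp2⟩
    simp only [lowF, mem_filter]
    refine ⟨hp, ?_⟩
    rintro ⟨he, -⟩
    rw [hp2] at he; exact absurd he (by decide)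
  · rintro x ⟨h0, h1⟩
    rw [lowF, mem_filter] at h1
    exact h1.2 ⟨rfl, lowF_subset C h0⟩


lemma key_mu {τ C : Finset (ι × Fin 2)} {m : ι} (hC : Chn C) (hsub : τ ⊆ C)
    (hCne : C ≠ τ) (hCneS : C ≠ insert (m, 1) τ) (hlow : IsLower τ)
    (hmτ : (m, 0) ∈ τ) (hmmax : ∀ p ∈ τ, p.2 = 0 → p.1 ≤ m) :
    μ τ < μ (lowF C) := by
  have hss : τ ⊂ C := ssubset_of_ne_of_subset (Ne.symm hCne) hsub
  have hzsub : τ.filter (fun p => p.2 = 0) ⊆ C.filter (fun p => p.2 = 0) :=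
    filter_subset_filter _ hsub
  have hzcard : (τ.filter (fun p => p.2 = 0)).card ≤ (C.filter (fun p => p.2 = 0)).card :=
    card_le_card hzsub
  have hcardlt : τ.card < C.card := card_lt_card hss
  rw [μ, μ, zeros_lowF]
  by_cases hd : ∃ x : ι, (x, 0) ∈ C ∧ (x, 1) ∈ C
  · obtain ⟨x, hx0, hx1⟩ := hd
    rw [lowF_eq_erase hC hx0 hx1, card_erase_of_mem hx1]
    by_cases hcard : τ.card + 1 < C.card
    · omega
    · have hCeq : C.card = τ.card + 1 := by omega
      obtain ⟨p, hpn, hins⟩ : ∃ a ∉ τ, insert a τ ⊆ C :=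
        Finset.exists_of_ssubset hss |>.imp (fun a ⟨ha, hna⟩ =>
          ⟨hna, insert_subset ha hsub⟩)
      have hCi : C = insert p τ := by
        refine (Finset.eq_of_subset_of_card_le hins ?_).symm
        rw [card_insert_of_notMem hpn, hCeq]
      rcases fin2 p.2 with he | he
      · -- p is a new zero vertex
        have hpz : p ∈ C.filter (fun p => p.2 = 0) := by
          rw [mem_filter]; exact ⟨by rw [hCi]; exact mem_insert_self _ _, he⟩
        have : insert p (τ.filter (fun p => p.2 = 0)) ⊆ C.filter (fun p => p.2 = 0) :=
          insert_subset hpz hzsub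
        have hnz : p ∉ τ.filter (fun p => p.2 = 0) := fun h => hpn (mem_filter.1 h).1
        have := card_le_card this
        rw [card_insert_of_notMem hnz] at this
        omega
      · -- p = (x,1) and x = m, contradiction
        exfalso
        have hp : p = (p.1, 1) := by rw [← he]
        have hx0τ : (x, 0) ∈ τ := by
          rw [hCi, mem_insert] at hx0
          rcases hx0 with h | h
          · rw [hp] at h; cases h
          · exact h
        have hx1p : (x, 1) = p := by
          rw [hCi, mem_insert] at hx1
          rcases hx1 with h | h
          · exact h.symm ▸ rfl
          · exact absurd ⟨hx0τ, h⟩ (hlow.2 x)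
        have hxm : x = m := by
          refine le_antisymm (hmmax _ hx0τ rfl) ?_
          exact chain_cmp hC (hsub hmτ) hx1
        exact hCneS (by rw [hCi, ← hx1p, hxm])
  · push_neg at hd
    rw [lowF_eq_of_not_doubled (fun x hx => hd x hx.1 hx.2)]
    omega

/-- Current complex given the set `R` of remaining lower faces. -/
def cur (K : Set (Finset ι)) (R : Finset (Finset (ι × Fin 2))) : Set (Finset (ι × Fin 2)) :=
  {C | C ∈ boxProd K (Set.univ : Set (Finset (Fin 2))) ∧
    ((∀ p ∈ C, p.2 = (1 : Fin 2)) ∨ lowF C ∈ R)}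


variable {K : Set (Finset ι)}

lemma step_collapse (hdc : ∀ σ ∈ K, ∀ τ ⊆ σ, τ ∈ K)
    {R : Finset (Finset (ι × Fin 2))}
    (hR : ∀ S ∈ R, S ∈ boxProd K (Set.univ : Set (Finset (Fin 2))) ∧ IsLower S)
    {τ : Finset (ι × Fin 2)} (hτR : τ ∈ R) (hmax : ∀ S ∈ R, μ S ≤ μ τ) :
    ElemCollapse (cur K R) (cur K (R.erase τ)) := by
  obtain ⟨hτP, hlow⟩ := hR τ hτR
  have hchainτ : Chn τ := (mem_boxProd_univ.1 hτP).2
  obtain ⟨p0, hp0, hp02⟩ := hlow.1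
  obtain ⟨q, hq, hqmax⟩ := Finset.exists_max_image (τ.filter (fun p => p.2 = 0))
    Prod.fst ⟨p0, mem_filter.2 ⟨hp0, hp02⟩⟩
  rw [mem_filter] at hq
  set m : ι := q.1 with hm
  have hmτ : (m, 0) ∈ τ := by
    have : q = (q.1, (0 : Fin 2)) := by
      rw [← hq.2]
    rw [← this]
    exact hq.1
  have hmmax : ∀ p ∈ τ, p.2 = 0 → p.1 ≤ m := fun p hp hp2 =>
    hqmax p (mem_filter.2 ⟨hp, hp2⟩)
  have hm1τ : (m, 1) ∉ τ := fun h => hlow.2 m ⟨hmτ, h⟩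
  set Sg : Finset (ι × Fin 2) := insert (m, 1) τ with hSg
  have hτsubSg : τ ⊆ Sg := subset_insert _ _
  have hSgne : Sg ≠ τ := fun h => hm1τ (h ▸ mem_insert_self _ _)
  have hchainSg : Chn Sg := by
    intro p hp r hr
    rw [hSg, mem_insert] at hp hr
    rcases hp with rfl | hp
    · rcases hr with rfl | hr
      · left; exact ⟨le_refl _, le_refl _⟩
      · rcases fin2 r.2 with he | he
        · right
          exact ⟨hmmax r hr he, by simp [he, Fin.le_def]⟩
        · left
          refine ⟨?_, ?_⟩
          · exact chain_cmp hchainτ hmτ (by rw [← he, Prod.mk.eta]; exact hr)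
          · simp [he, Fin.le_def]
    · rcases hr with rfl | hr
      · rcases fin2 p.2 with he | he
        · left
          exact ⟨hmmax p hp he, by simp [he, Fin.le_def]⟩
        · right
          refine ⟨?_, ?_⟩
          · exact chain_cmp hchainτ hmτ (by rw [← he, Prod.mk.eta]; exact hp)
          · simp [he, Fin.le_def]
      · exact hchainτ p hp r hr
  have hSgP : Sg ∈ boxProd K (Set.univ : Set (Finset (Fin 2))) := by
    rw [mem_boxProd_univ]
    refine ⟨?_, hchainSg⟩
    have : Sg.image Prod.fst = τ.image Prod.fst := by
      rw [hSg, image_insert]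
      exact insert_eq_self.2 (mem_image.2 ⟨(m, 0), hmτ, rfl⟩)
    rw [this]
    exact (mem_boxProd_univ.1 hτP).1
  have lowτ : lowF τ = τ := lowF_eq_of_not_doubled hlow.2
  have lowSg : lowF Sg = τ := by
    rw [lowF_eq_erase hchainSg (hτsubSg hmτ) (mem_insert_self _ _), hSg,
      erase_insert hm1τ]
  have hτcur : τ ∈ cur K R := ⟨hτP, Or.inr (by rw [lowτ]; exact hτR)⟩
  have hSgcur : Sg ∈ cur K R := ⟨hSgP, Or.inr (by rw [lowSg]; exact hτR)⟩
  -- any coface of τ in the current complex is τ or Sg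
  have coface : ∀ C ∈ cur K R, τ ⊆ C → C = τ ∨ C = Sg := by
    rintro C ⟨hCP, hCor⟩ hsub
    have hz : ∃ p ∈ C, p.2 = (0 : Fin 2) := ⟨(m, 0), hsub hmτ, rfl⟩
    have hones : ¬(∀ p ∈ C, p.2 = (1 : Fin 2)) := by
      obtain ⟨p, hp, hp2⟩ := hz
      intro h
      rw [h p hp] at hp2
      exact absurd hp2 (by decide)
    have hlowC : lowF C ∈ R := hCor.resolve_left hones
    by_contra hcon
    push_neg at hcon
    exact absurd (hmax _ hlowC)
      (not_le.2 (key_mu (mem_boxProd_univ.1 hCP).2 hsub hcon.1 hcon.2 hlow hmτ hmmax))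
  have hfacet : IsFacet (cur K R) Sg := by
    refine ⟨hSgcur, fun C hC hsubC => ?_⟩
    rcases coface C hC (hτsubSg.trans hsubC) with rfl | rfl
    · exact absurd (hsubC (mem_insert_self _ _)) hm1τ
    · rfl
  have hfree : IsFreeFace (cur K R) τ := by
    refine ⟨hτcur, ?_, ?_, ?_⟩
    · intro h
      rw [h] at hmτ
      exact absurd hmτ (notMem_empty _)
    · intro hfa
      exact hSgne (hfa.2 Sg hSgcur hτsubSg)
    · refine ⟨Sg, ⟨hfacet, hτsubSg⟩, ?_⟩
      rintro F ⟨hFfac, hτF⟩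
      rcases coface F hFfac.1 hτF with rfl | rfl
      · exact absurd (hFfac.2 Sg hSgcur hτsubSg) hSgne
      · rfl
  refine ⟨τ, hfree, ?_⟩
  ext C
  constructor
  · rintro ⟨hCP, hCor⟩
    have hCR : C ∈ cur K R := ⟨hCP, hCor.imp id (fun h => mem_of_mem_erase h)⟩
    refine ⟨hCR, ?_⟩
    intro hsub
    have hones : ¬(∀ p ∈ C, p.2 = (1 : Fin 2)) := by
      intro h
      have := h (m, 0) (hsub hmτ)
      simp at this
    have hlowC : lowF C ∈ R.erase τ := hCor.resolve_left hones
    have : C = τ ∨ C = Sg := coface C hCR hsub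
    rcases this with rfl | rfl
    · rw [lowτ] at hlowC
      exact absurd rfl (ne_of_mem_erase hlowC)
    · rw [lowSg] at hlowC
      exact absurd rfl (ne_of_mem_erase hlowC)
  · rintro ⟨⟨hCP, hCor⟩, hns⟩
    refine ⟨hCP, ?_⟩
    rcases hCor with h | h
    · exact Or.inl h
    · refine Or.inr (mem_erase.2 ⟨?_, h⟩)
      intro heq
      exact hns (heq ▸ lowF_subset C)

lemma collapse_cur (hdc : ∀ σ ∈ K, ∀ τ ⊆ σ, τ ∈ K)
    (R : Finset (Finset (ι × Fin 2)))
    (hR : ∀ S ∈ R, S ∈ boxProd K (Set.univ : Set (Finset (Fin 2))) ∧ IsLower S) :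
    Collapses (cur K R) (cur K ∅) := by
  induction R using Finset.strongInduction with
  | _ R ih =>
    rcases R.eq_empty_or_nonempty with rfl | hne
    · exact Relation.ReflTransGen.refl
    · obtain ⟨τ, hτR, hmax⟩ := Finset.exists_max_image R μ hne
      exact Relation.ReflTransGen.head (step_collapse hdc hR hτR hmax)
        (ih (R.erase τ) (erase_ssubset hτR)
          (fun S hS => hR S (mem_of_mem_erase hS)))

lemma cur_empty :
    cur K (∅ : Finset (Finset (ι × Fin 2))) = boxProd K {σ : Finset (Fin 2) | σ ⊆ {1}} := by
  ext C
  constructor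
  · rintro ⟨hCP, hCor⟩
    rcases hCor with h | h
    · obtain ⟨h1, -, h3⟩ := hCP
      refine ⟨h1, ?_, h3⟩
      intro e he
      rw [mem_image] at he
      obtain ⟨p, hp, rfl⟩ := he
      rw [mem_singleton]
      exact h p hp
    · exact absurd h (notMem_empty _)
  · rintro ⟨h1, h2, h3⟩
    refine ⟨⟨h1, Set.mem_univ _, h3⟩, Or.inl ?_⟩
    intro p hp
    have : p.2 ∈ C.image Prod.snd := mem_image.2 ⟨p, hp, rfl⟩
    simpa using h2 this

lemma collapse_main (hfin : K.Finite) (hdc : ∀ σ ∈ K, ∀ τ ⊆ σ, τ ∈ K) :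
    Collapses (boxProd K (Set.univ : Set (Finset (Fin 2))))
      (boxProd K {σ : Finset (Fin 2) | σ ⊆ {1}}) := by
  set V : Finset ι := hfin.toFinset.sup id with hV
  have hσV : ∀ σ ∈ K, σ ⊆ V := fun σ hσ =>
    Finset.le_sup (f := id) (hfin.mem_toFinset.2 hσ)
  have hSV : ∀ S ∈ boxProd K (Set.univ : Set (Finset (Fin 2))),
      S ⊆ V ×ˢ (Finset.univ : Finset (Fin 2)) := by
    intro S hS p hp
    rw [mem_product]
    refine ⟨hσV _ (mem_boxProd_univ.1 hS).1 ?_, mem_univ _⟩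
    exact mem_image.2 ⟨p, hp, rfl⟩
  set R : Finset (Finset (ι × Fin 2)) :=
    (V ×ˢ (Finset.univ : Finset (Fin 2))).powerset.filter
      (fun S => S ∈ boxProd K (Set.univ : Set (Finset (Fin 2))) ∧ IsLower S) with hRdef
  have hR : ∀ S ∈ R, S ∈ boxProd K (Set.univ : Set (Finset (Fin 2))) ∧ IsLower S :=
    fun S hS => (mem_filter.1 hS).2
  have hfull : cur K R = boxProd K (Set.univ : Set (Finset (Fin 2))) := by
    ext C
    constructor
    · exact fun h => h.1
    · intro hC
      refine ⟨hC, ?_⟩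
      by_cases hones : ∀ p ∈ C, p.2 = (1 : Fin 2)
      · exact Or.inl hones
      · refine Or.inr ?_
        push_neg at hones
        obtain ⟨p, hp, hp2⟩ := hones
        have hpz : p.2 = 0 := by
          rcases fin2 p.2 with h | h
          · exact h
          · exact absurd h hp2
        have hlowP : lowF C ∈ boxProd K (Set.univ : Set (Finset (Fin 2))) := by
          rw [mem_boxProd_univ]
          obtain ⟨h1, h2⟩ := mem_boxProd_univ.1 hC
          refine ⟨hdc _ h1 _ (image_subset_image (lowF_subset C)), ?_⟩
          intro a ha b hb
          exact h2 a (lowF_subset C ha) b (lowF_subset C hb)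
        rw [hRdef, mem_filter, mem_powerset]
        exact ⟨(lowF_subset C).trans (hSV C hC), hlowP, lowF_isLower ⟨p, hp, hpz⟩⟩
  rw [← hfull, ← cur_empty]
  exact collapse_cur hdc R hR


/-! ### The deformation retraction -/

noncomputable section Homotopy

/-- total mass at a vertex of `ι`. -/
def gmass (f : ι × Fin 2 → ℝ) (x : ι) : ℝ := f (x, 0) + f (x, 1)

/-- cumulative mass from `x` upwards (inclusive). -/
def Gge (V : Finset ι) (f : ι × Fin 2 → ℝ) (x : ι) : ℝ :=
  ∑ y ∈ V.filter (fun y => x ≤ y), gmass f y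

/-- cumulative mass strictly above `x`. -/
def Ggt (V : Finset ι) (f : ι × Fin 2 → ℝ) (x : ι) : ℝ :=
  ∑ y ∈ V.filter (fun y => x < y), gmass f y

/-- total mass on the top level. -/
def tmass (V : Finset ι) (f : ι × Fin 2 → ℝ) : ℝ := ∑ y ∈ V, f (y, 1)

/-- the vertical-push homotopy, in simplicial coordinates. -/
def hmap (V : Finset ι) (f : ι × Fin 2 → ℝ) (s : ℝ) : ι × Fin 2 → ℝ :=
  fun p =>
    if p.2 = 1 then
      min (Gge V f p.1) ((1 - s) * tmass V f + s) -
        min (Ggt V f p.1) ((1 - s) * tmass V f + s)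
    else
      gmass f p.1 -
        (min (Gge V f p.1) ((1 - s) * tmass V f + s) -
          min (Ggt V f p.1) ((1 - s) * tmass V f + s))

variable {V : Finset ι} {f : ι × Fin 2 → ℝ} {x : ι} {s : ℝ}

lemma hmap_one (V : Finset ι) (f : ι × Fin 2 → ℝ) (s : ℝ) (x : ι) :
    hmap V f s (x, 1) =
      min (Gge V f x) ((1 - s) * tmass V f + s) -
        min (Ggt V f x) ((1 - s) * tmass V f + s) := rfl

lemma hmap_zero (V : Finset ι) (f : ι × Fin 2 → ℝ) (s : ℝ) (x : ι) :
    hmap V f s (x, 0) =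
      gmass f x -
        (min (Gge V f x) ((1 - s) * tmass V f + s) -
          min (Ggt V f x) ((1 - s) * tmass V f + s)) := by
  rw [hmap]
  norm_num

lemma gmass_nonneg (hf : ∀ v, 0 ≤ f v) : 0 ≤ gmass f x :=
  add_nonneg (hf _) (hf _)

lemma Ggt_le_Gge (hf : ∀ v, 0 ≤ f v) : Ggt V f x ≤ Gge V f x := by
  apply Finset.sum_le_sum_of_subset_of_nonneg
  · intro y hy
    rw [mem_filter] at hy ⊢
    exact ⟨hy.1, le_of_lt hy.2⟩
  · exact fun y _ _ => gmass_nonneg hf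

lemma Ggt_nonneg (hf : ∀ v, 0 ≤ f v) : 0 ≤ Ggt V f x :=
  Finset.sum_nonneg fun y _ => gmass_nonneg hf

lemma Gge_le_total (hf : ∀ v, 0 ≤ f v) : Gge V f x ≤ ∑ y ∈ V, gmass f y :=
  Finset.sum_le_sum_of_subset_of_nonneg (filter_subset _ _) fun y _ _ => gmass_nonneg hf

lemma Gge_split (hx : x ∈ V) : Gge V f x = gmass f x + Ggt V f x := by
  rw [Gge, Ggt]
  have : V.filter (fun y => x ≤ y) = insert x (V.filter (fun y => x < y)) := by
    ext y
    rw [mem_insert, mem_filter, mem_filter]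
    constructor
    · rintro ⟨hy, hxy⟩
      rcases eq_or_lt_of_le hxy with rfl | h
      · exact Or.inl rfl
      · exact Or.inr ⟨hy, h⟩
    · rintro (rfl | ⟨hy, h⟩)
      · exact ⟨hx, le_refl _⟩
      · exact ⟨hy, le_of_lt h⟩
  rw [this, Finset.sum_insert (by rw [mem_filter]; rintro ⟨-, h⟩; exact lt_irrefl x h)]

lemma Gge_eq_Ggt (hx : x ∉ V) : Gge V f x = Ggt V f x := by
  rw [Gge, Ggt]
  congr 1
  ext y
  rw [mem_filter, mem_filter]
  constructor
  · rintro ⟨hy, hxy⟩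
    refine ⟨hy, lt_of_le_of_ne hxy ?_⟩
    rintro rfl
    exact hx hy
  · rintro ⟨hy, hxy⟩
    exact ⟨hy, le_of_lt hxy⟩


variable {S : Finset (ι × Fin 2)}

lemma sum_gmass_eq_one (hSV : S ⊆ V ×ˢ (Finset.univ : Finset (Fin 2)))
    (hvan : ∀ p ∉ S, f p = 0) (hsum : ∑ p ∈ S, f p = 1) :
    ∑ y ∈ V, gmass f y = 1 := by
  have h1 : ∑ y ∈ V, gmass f y = ∑ p ∈ V ×ˢ (Finset.univ : Finset (Fin 2)), f p := by
    rw [Finset.sum_product]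
    refine Finset.sum_congr rfl fun y _ => ?_
    rw [Fin.sum_univ_two, gmass]
  rw [h1, ← Finset.sum_subset hSV (fun p _ hpn => hvan p hpn), hsum]

lemma tmass_le (hf : ∀ v, 0 ≤ f v) (hSV : S ⊆ V ×ˢ (Finset.univ : Finset (Fin 2)))
    (hvan : ∀ p ∉ S, f p = 0) (hsum : ∑ p ∈ S, f p = 1) :
    0 ≤ tmass V f ∧ tmass V f ≤ 1 := by
  constructor
  · exact Finset.sum_nonneg fun y _ => hf _
  · rw [← sum_gmass_eq_one hSV hvan hsum]
    exact Finset.sum_le_sum fun y _ => le_add_of_nonneg_left (hf _)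

/-- The reconstruction identity. -/
lemma recon {W : Finset ι} (hf : ∀ v, 0 ≤ f v) (hchain : Chn S)
    (hvan : ∀ p ∉ S, f p = 0) (hWV : W ⊆ V)
    (hprop : ∀ y ∈ V, y ∉ W → ∀ z ∈ W, y < z) :
    min (∑ z ∈ W, gmass f z) (tmass V f) = ∑ z ∈ W, f (z, 1) := by
  have hmemS : ∀ p, f p ≠ 0 → p ∈ S := fun p hp => by
    by_contra h
    exact hp (hvan p h)
  by_cases hex : ∃ y ∈ V, y ∉ W ∧ f (y, 1) ≠ 0
  · obtain ⟨y, hyV, hyW, hy1⟩ := hex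
    have hy1S : (y, 1) ∈ S := hmemS _ hy1
    have hz0 : ∀ z ∈ W, f (z, 0) = 0 := by
      intro z hz
      by_contra h
      have hz0S : (z, 0) ∈ S := hmemS _ h
      have : z ≤ y := chain_cmp hchain hz0S hy1S
      exact absurd (hprop y hyV hyW z hz) (not_lt.2 this)
    have hW1 : ∑ z ∈ W, gmass f z = ∑ z ∈ W, f (z, 1) := by
      refine Finset.sum_congr rfl fun z hz => ?_
      rw [gmass, hz0 z hz, zero_add]
    rw [hW1]
    refine min_eq_left ?_
    exact Finset.sum_le_sum_of_subset_of_nonneg hWV fun z _ _ => hf _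
  · push_neg at hex
    have ht : tmass V f = ∑ z ∈ W, f (z, 1) := by
      rw [tmass]
      exact (Finset.sum_subset hWV fun y hy hyn => hex y hy hyn).symm
    rw [ht]
    refine min_eq_right ?_
    exact Finset.sum_le_sum fun z _ => le_add_of_nonneg_left (hf _)

/-- `s = 0` gives back `f`. -/
lemma hmap_s_zero (hf : ∀ v, 0 ≤ f v) (hchain : Chn S)
    (hvan : ∀ p ∉ S, f p = 0) (hSV : S ⊆ V ×ˢ (Finset.univ : Finset (Fin 2))) :
    hmap V f 0 = f := by
  have hfV : ∀ p : ι × Fin 2, p.1 ∉ V → f p = 0 := by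
    intro p hp
    refine hvan p fun hpS => hp ?_
    exact (mem_product.1 (hSV hpS)).1
  have hτ : (1 - (0:ℝ)) * tmass V f + 0 = tmass V f := by ring
  have hA : ∀ x : ι, min (Gge V f x) (tmass V f) = ∑ z ∈ V.filter (fun y => x ≤ y), f (z, 1) := by
    intro x
    exact recon hf hchain hvan (filter_subset _ _)
      (fun y hy hyW z hz => by
        rw [mem_filter] at hz
        have hyx : ¬ x ≤ y := fun h => hyW (mem_filter.2 ⟨hy, h⟩)
        exact lt_of_lt_of_le (not_le.1 hyx) hz.2)
  have hB : ∀ x : ι, min (Ggt V f x) (tmass V f) = ∑ z ∈ V.filter (fun y => x < y), f (z, 1) := by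
    intro x
    exact recon hf hchain hvan (filter_subset _ _)
      (fun y hy hyW z hz => by
        rw [mem_filter] at hz
        have hyx : ¬ x < y := fun h => hyW (mem_filter.2 ⟨hy, h⟩)
        exact lt_of_le_of_lt (not_lt.1 hyx) hz.2)
  have hdiff : ∀ x : ι,
      min (Gge V f x) (tmass V f) - min (Ggt V f x) (tmass V f) = f (x, 1) := by
    intro x
    rw [hA, hB]
    by_cases hx : x ∈ V
    · have : V.filter (fun y => x ≤ y) = insert x (V.filter (fun y => x < y)) := by
        ext y
        rw [mem_insert, mem_filter, mem_filter]
        constructor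
        · rintro ⟨hy, hxy⟩
          rcases eq_or_lt_of_le hxy with rfl | h
          · exact Or.inl rfl
          · exact Or.inr ⟨hy, h⟩
        · rintro (rfl | ⟨hy, h⟩)
          · exact ⟨hx, le_refl _⟩
          · exact ⟨hy, le_of_lt h⟩
      rw [this, Finset.sum_insert (by rw [mem_filter]; rintro ⟨-, h⟩; exact lt_irrefl x h)]
      ring
    · have : V.filter (fun y => x ≤ y) = V.filter (fun y => x < y) := by
        ext y
        rw [mem_filter, mem_filter]
        constructor
        · rintro ⟨hy, hxy⟩
          refine ⟨hy, lt_of_le_of_ne hxy ?_⟩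
          rintro rfl
          exact hx hy
        · rintro ⟨hy, hxy⟩
          exact ⟨hy, le_of_lt hxy⟩
      rw [this, hfV (x, 1) hx]
      ring
  funext p
  obtain ⟨x, e⟩ := p
  rcases fin2 e with rfl | rfl
  · rw [hmap_zero, hτ, hdiff, gmass]
    ring
  · rw [hmap_one, hτ, hdiff]


variable {K : Set (Finset ι)}

/-- Membership of the homotopy in the prism, for `0 ≤ s ≤ 1`. -/
lemma hmap_mem (hdc : ∀ σ ∈ K, ∀ τ ⊆ σ, τ ∈ K) (hf : ∀ v, 0 ≤ f v)
    (hSP : S ∈ boxProd K (Set.univ : Set (Finset (Fin 2))))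
    (hvan : ∀ p ∉ S, f p = 0) (hsum : ∑ p ∈ S, f p = 1)
    (hSV : S ⊆ V ×ˢ (Finset.univ : Finset (Fin 2))) (hs0 : 0 ≤ s) (hs1 : s ≤ 1) :
    hmap V f s ∈ geomReal (boxProd K (Set.univ : Set (Finset (Fin 2)))) := by
  classical
  set τv : ℝ := (1 - s) * tmass V f + s with hτv
  set σ : Finset ι := S.image Prod.fst with hσ
  have hσK : σ ∈ K := (mem_boxProd_univ.1 hSP).1
  have hchain : Chn S := (mem_boxProd_univ.1 hSP).2
  have hσV : σ ⊆ V := by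
    intro x hx
    obtain ⟨p, hp, rfl⟩ := mem_image.1 hx
    exact (mem_product.1 (hSV hp)).1
  have hvg : ∀ x ∉ σ, gmass f x = 0 := by
    intro x hx
    rw [gmass, hvan (x, 0) (fun h => hx (mem_image.2 ⟨_, h, rfl⟩)),
      hvan (x, 1) (fun h => hx (mem_image.2 ⟨_, h, rfl⟩)), add_zero]
  have hd_nonneg : ∀ x : ι, 0 ≤ min (Gge V f x) τv - min (Ggt V f x) τv :=
    fun x => sub_nonneg.2 (min_le_min (Ggt_le_Gge hf) le_rfl)
  have hd_le : ∀ x : ι, min (Gge V f x) τv - min (Ggt V f x) τv ≤ gmass f x := by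
    intro x
    by_cases hx : x ∈ V
    · rw [Gge_split hx]
      have h1 : min (Ggt V f x + gmass f x) (τv + gmass f x) = min (Ggt V f x) τv + gmass f x :=
        min_add_add_right _ _ _
      have h2 : min (gmass f x + Ggt V f x) τv ≤ min (Ggt V f x + gmass f x) (τv + gmass f x) :=
        min_le_min (le_of_eq (add_comm _ _)) (le_add_of_nonneg_right (gmass_nonneg hf))
      linarith
    · rw [Gge_eq_Ggt hx, sub_self]
      exact gmass_nonneg hf
  set T : Finset (ι × Fin 2) :=
    (σ ×ˢ (Finset.univ : Finset (Fin 2))).filter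
      (fun p => if p.2 = 1 then Ggt V f p.1 < τv else τv < Gge V f p.1) with hT
  have hTvan : ∀ p ∉ T, hmap V f s p = 0 := by
    rintro ⟨x, e⟩ hp
    by_cases hx : x ∈ σ
    · have hmem : ((x, e) : ι × Fin 2) ∈ σ ×ˢ (Finset.univ : Finset (Fin 2)) :=
        mem_product.2 ⟨hx, mem_univ _⟩
      have hcond : ¬ (if e = 1 then Ggt V f x < τv else τv < Gge V f x) :=
        fun hc => hp (mem_filter.2 ⟨hmem, hc⟩)
      have hxV : x ∈ V := hσV hx
      rcases fin2 e with rfl | rfl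
      · rw [if_neg (by decide : ¬ ((0 : Fin 2) = 1))] at hcond
        have hGle : Gge V f x ≤ τv := not_lt.1 hcond
        rw [hmap_zero, ← hτv, min_eq_left hGle,
          min_eq_left ((Ggt_le_Gge hf).trans hGle), Gge_split hxV]
        ring
      · rw [if_pos rfl] at hcond
        have hGge : τv ≤ Ggt V f x := not_lt.1 hcond
        rw [hmap_one, ← hτv, min_eq_right (hGge.trans (Ggt_le_Gge hf)),
          min_eq_right hGge, sub_self]
    · have hg : gmass f x = 0 := hvg x hx
      have hGeq : Gge V f x = Ggt V f x := by
        by_cases hxV : x ∈ V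
        · rw [Gge_split hxV, hg, zero_add]
        · exact Gge_eq_Ggt hxV
      rcases fin2 e with rfl | rfl
      · rw [hmap_zero, ← hτv, hGeq, sub_self, hg, sub_zero]
      · rw [hmap_one, ← hτv, hGeq, sub_self]
  have hTP : T ∈ boxProd K (Set.univ : Set (Finset (Fin 2))) := by
    rw [mem_boxProd_univ]
    constructor
    · refine hdc _ hσK _ ?_
      intro x hx
      obtain ⟨p, hp, rfl⟩ := mem_image.1 hx
      exact (mem_product.1 (mem_filter.1 hp).1).1
    · intro p hp q hq
      obtain ⟨hpm, hpc⟩ := mem_filter.1 hp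
      obtain ⟨hqm, hqc⟩ := mem_filter.1 hq
      rcases fin2 p.2 with hp2 | hp2 <;> rcases fin2 q.2 with hq2 | hq2
      · rcases le_total p.1 q.1 with h | h
        · exact Or.inl ⟨h, by rw [hp2, hq2]⟩
        · exact Or.inr ⟨h, by rw [hp2, hq2]⟩
      · rw [hp2, if_neg (by decide : ¬ ((0 : Fin 2) = 1))] at hpc
        rw [hq2, if_pos rfl] at hqc
        refine Or.inl ⟨?_, by rw [hp2, hq2]; exact Fin.zero_le 1⟩
        by_contra h
        have hlt : q.1 < p.1 := not_le.1 h
        have hle : Gge V f p.1 ≤ Ggt V f q.1 := by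
          apply Finset.sum_le_sum_of_subset_of_nonneg
          · intro y hy
            rw [mem_filter] at hy ⊢
            exact ⟨hy.1, lt_of_lt_of_le hlt hy.2⟩
          · exact fun y _ _ => gmass_nonneg hf
        linarith
      · rw [hq2, if_neg (by decide : ¬ ((0 : Fin 2) = 1))] at hqc
        rw [hp2, if_pos rfl] at hpc
        refine Or.inr ⟨?_, by rw [hp2, hq2]; exact Fin.zero_le 1⟩
        by_contra h
        have hlt : p.1 < q.1 := not_le.1 h
        have hle : Gge V f q.1 ≤ Ggt V f p.1 := by
          apply Finset.sum_le_sum_of_subset_of_nonneg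
          · intro y hy
            rw [mem_filter] at hy ⊢
            exact ⟨hy.1, lt_of_lt_of_le hlt hy.2⟩
          · exact fun y _ _ => gmass_nonneg hf
        linarith
      · rcases le_total p.1 q.1 with h | h
        · exact Or.inl ⟨h, by rw [hp2, hq2]⟩
        · exact Or.inr ⟨h, by rw [hp2, hq2]⟩
  have hSσ : S ⊆ σ ×ˢ (Finset.univ : Finset (Fin 2)) := by
    intro p hp
    exact mem_product.2 ⟨mem_image.2 ⟨p, hp, rfl⟩, mem_univ _⟩
  have hTsum : ∑ p ∈ T, hmap V f s p = 1 := by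
    rw [Finset.sum_subset (filter_subset _ _) (fun p _ hpn => hTvan p hpn)]
    rw [Finset.sum_product]
    have : ∀ x ∈ σ, ∑ e : Fin 2, hmap V f s (x, e) = gmass f x := by
      intro x _
      rw [Fin.sum_univ_two, hmap_zero, hmap_one, ← hτv]
      ring
    rw [Finset.sum_congr rfl this]
    exact sum_gmass_eq_one hSσ hvan hsum
  refine ⟨?_, T, mem_boxProd_univ.2 (mem_boxProd_univ.1 hTP), hTvan, hTsum⟩
  rintro ⟨x, e⟩
  rcases fin2 e with rfl | rfl
  · rw [hmap_zero, ← hτv]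
    linarith [hd_le x]
  · rw [hmap_one, ← hτv]
    exact hd_nonneg x

/-- At `s = 1` the homotopy lands in the top copy. -/
lemma hmap_s_one_mem (hdc : ∀ σ ∈ K, ∀ τ ⊆ σ, τ ∈ K) (hf : ∀ v, 0 ≤ f v)
    (hSP : S ∈ boxProd K (Set.univ : Set (Finset (Fin 2))))
    (hvan : ∀ p ∉ S, f p = 0) (hsum : ∑ p ∈ S, f p = 1)
    (hSV : S ⊆ V ×ˢ (Finset.univ : Finset (Fin 2))) :
    hmap V f 1 ∈ geomReal (boxProd K {σ : Finset (Fin 2) | σ ⊆ {1}}) := by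
  classical
  set σ : Finset ι := S.image Prod.fst with hσ
  have hσK : σ ∈ K := (mem_boxProd_univ.1 hSP).1
  have hσV : σ ⊆ V := by
    intro x hx
    obtain ⟨p, hp, rfl⟩ := mem_image.1 hx
    exact (mem_product.1 (hSV hp)).1
  have hvg : ∀ x ∉ σ, gmass f x = 0 := by
    intro x hx
    rw [gmass, hvan (x, 0) (fun h => hx (mem_image.2 ⟨_, h, rfl⟩)),
      hvan (x, 1) (fun h => hx (mem_image.2 ⟨_, h, rfl⟩)), add_zero]
  have hτ : (1 - (1:ℝ)) * tmass V f + 1 = 1 := by ring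
  have htotal : ∑ y ∈ V, gmass f y = 1 := sum_gmass_eq_one hSV hvan hsum
  have hGge1 : ∀ x : ι, Gge V f x ≤ 1 := fun x => htotal ▸ Gge_le_total hf
  have hdV : ∀ x : ι, min (Gge V f x) 1 - min (Ggt V f x) 1
      = (if x ∈ V then gmass f x else 0) := by
    intro x
    rw [min_eq_left (hGge1 x), min_eq_left ((Ggt_le_Gge hf).trans (hGge1 x))]
    by_cases hx : x ∈ V
    · rw [if_pos hx, Gge_split hx]; ring
    · rw [if_neg hx, Gge_eq_Ggt hx, sub_self]
  have h1 : ∀ x : ι, hmap V f 1 (x, 1) = (if x ∈ V then gmass f x else 0) := by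
    intro x
    rw [hmap_one, hτ, hdV]
  have h0 : ∀ x : ι, hmap V f 1 (x, 0) = 0 := by
    intro x
    rw [hmap_zero, hτ, hdV]
    by_cases hx : x ∈ V
    · rw [if_pos hx]; ring
    · rw [if_neg hx, sub_zero]
      exact hvg x (fun h => hx (hσV h))
  set T1 : Finset (ι × Fin 2) := σ.image (fun x => (x, 1)) with hT1
  have hT1mem : ∀ x : ι, ((x, (1 : Fin 2)) ∈ T1 ↔ x ∈ σ) := by
    intro x
    rw [hT1, mem_image]
    constructor
    · rintro ⟨y, hy, heq⟩
      cases heq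
      exact hy
    · exact fun hx => ⟨x, hx, rfl⟩
  have hT1van : ∀ p ∉ T1, hmap V f 1 p = 0 := by
    rintro ⟨x, e⟩ hp
    rcases fin2 e with rfl | rfl
    · exact h0 x
    · rw [h1]
      have hx : x ∉ σ := fun h => hp ((hT1mem x).2 h)
      by_cases hxV : x ∈ V
      · rw [if_pos hxV]
        exact hvg x hx
      · rw [if_neg hxV]
  have hT1P : T1 ∈ boxProd K {σ' : Finset (Fin 2) | σ' ⊆ {1}} := by
    refine ⟨?_, ?_, ?_⟩
    · have : T1.image Prod.fst = σ := by
        ext y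
        simp [hT1]
      rw [this]
      exact hσK
    · intro e he
      obtain ⟨p, hp, rfl⟩ := mem_image.1 he
      obtain ⟨y, hy, rfl⟩ := mem_image.1 hp
      exact mem_singleton.2 rfl
    · intro p hp q hq
      obtain ⟨y, hy, rfl⟩ := mem_image.1 hp
      obtain ⟨z, hz, rfl⟩ := mem_image.1 hq
      rcases le_total y z with h | h
      · exact Or.inl ⟨h, le_refl _⟩
      · exact Or.inr ⟨h, le_refl _⟩
  have hT1sum : ∑ p ∈ T1, hmap V f 1 p = 1 := by
    rw [hT1, Finset.sum_image (fun a _ b _ h => congrArg Prod.fst h)]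
    have : ∀ x ∈ σ, hmap V f 1 (x, 1) = gmass f x := by
      intro x hx
      rw [h1, if_pos (hσV hx)]
    rw [Finset.sum_congr rfl this]
    have hSσ : S ⊆ σ ×ˢ (Finset.univ : Finset (Fin 2)) := by
      intro p hp
      exact mem_product.2 ⟨mem_image.2 ⟨p, hp, rfl⟩, mem_univ _⟩
    exact sum_gmass_eq_one hSσ hvan hsum
  refine ⟨?_, T1, hT1P, hT1van, hT1sum⟩
  rintro ⟨x, e⟩
  rcases fin2 e with rfl | rfl
  · rw [h0]
  · rw [h1]
    by_cases hx : x ∈ V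
    · rw [if_pos hx]; exact gmass_nonneg hf
    · rw [if_neg hx]

/-- Points of the top copy are fixed by the homotopy. -/
lemma hmap_fixed (hKV : ∀ σ ∈ K, σ ⊆ V) (hf : ∀ v, 0 ≤ f v)
    (hSP : S ∈ boxProd K {σ : Finset (Fin 2) | σ ⊆ {1}})
    (hvan : ∀ p ∉ S, f p = 0) (hsum : ∑ p ∈ S, f p = 1) (s : ℝ) :
    hmap V f s = f := by
  classical
  obtain ⟨hfst, hsnd, hch⟩ := hSP
  have hS1 : ∀ p ∈ S, p.2 = (1 : Fin 2) := by
    intro p hp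
    have : p.2 ∈ S.image Prod.snd := mem_image.2 ⟨p, hp, rfl⟩
    simpa using hsnd this
  have hSsub : S ⊆ V ×ˢ ({1} : Finset (Fin 2)) := by
    intro p hp
    refine mem_product.2 ⟨hKV _ hfst (mem_image.2 ⟨p, hp, rfl⟩), ?_⟩
    rw [mem_singleton]
    exact hS1 p hp
  have hSV : S ⊆ V ×ˢ (Finset.univ : Finset (Fin 2)) :=
    hSsub.trans (product_subset_product_right (subset_univ _))
  have hf00 : ∀ x : ι, f (x, 0) = 0 := by
    intro x
    refine hvan _ fun h => ?_
    have := hS1 _ h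
    simp at this
  have hf1V : ∀ x ∉ V, f (x, 1) = 0 := by
    intro x hx
    refine hvan _ fun h => hx (mem_product.1 (hSsub h)).1
  have ht1 : tmass V f = 1 := by
    rw [tmass]
    have h1 : ∑ y ∈ V, f (y, 1) = ∑ p ∈ V ×ˢ ({1} : Finset (Fin 2)), f p := by
      rw [Finset.sum_product]
      exact Finset.sum_congr rfl fun y _ => (Finset.sum_singleton _ _).symm
    rw [h1, ← Finset.sum_subset hSsub (fun p _ hpn => hvan p hpn), hsum]
  have hτ : (1 - s) * tmass V f + s = 1 := by rw [ht1]; ring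
  have htotal : ∑ y ∈ V, gmass f y = 1 := sum_gmass_eq_one hSV hvan hsum
  have hGge1 : ∀ x : ι, Gge V f x ≤ 1 := fun x => htotal ▸ Gge_le_total hf
  have hdV : ∀ x : ι, min (Gge V f x) ((1 - s) * tmass V f + s)
      - min (Ggt V f x) ((1 - s) * tmass V f + s) = f (x, 1) := by
    intro x
    rw [hτ, min_eq_left (hGge1 x), min_eq_left ((Ggt_le_Gge hf).trans (hGge1 x))]
    by_cases hx : x ∈ V
    · rw [Gge_split hx, gmass, hf00]
      ring
    · rw [Gge_eq_Ggt hx, sub_self, hf1V x hx]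
  funext p
  obtain ⟨x, e⟩ := p
  rcases fin2 e with rfl | rfl
  · rw [hmap_zero, hdV, gmass, hf00]
    ring
  · rw [hmap_one, hdV]


lemma hmap_continuous (V : Finset ι) (p : ι × Fin 2) :
    Continuous (fun q : ((ι × Fin 2) → ℝ) × ℝ => hmap V q.1 q.2 p) := by
  have hev : ∀ r : ι × Fin 2, Continuous (fun q : ((ι × Fin 2) → ℝ) × ℝ => q.1 r) :=
    fun r => (continuous_apply r).comp continuous_fst
  have hg : ∀ y : ι, Continuous (fun q : ((ι × Fin 2) → ℝ) × ℝ => gmass q.1 y) :=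
    fun y => (hev (y, 0)).add (hev (y, 1))
  have htm : Continuous (fun q : ((ι × Fin 2) → ℝ) × ℝ => tmass V q.1) :=
    continuous_finset_sum _ fun y _ => hev (y, 1)
  have hτ : Continuous (fun q : ((ι × Fin 2) → ℝ) × ℝ => (1 - q.2) * tmass V q.1 + q.2) :=
    (((continuous_const.sub continuous_snd).mul htm).add continuous_snd)
  have hGge : Continuous (fun q : ((ι × Fin 2) → ℝ) × ℝ => Gge V q.1 p.1) :=
    continuous_finset_sum _ fun y _ => hg y
  have hGgt : Continuous (fun q : ((ι × Fin 2) → ℝ) × ℝ => Ggt V q.1 p.1) :=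
    continuous_finset_sum _ fun y _ => hg y
  have hd : Continuous (fun q : ((ι × Fin 2) → ℝ) × ℝ =>
      min (Gge V q.1 p.1) ((1 - q.2) * tmass V q.1 + q.2) -
        min (Ggt V q.1 p.1) ((1 - q.2) * tmass V q.1 + q.2)) :=
    (hGge.min hτ).sub (hGgt.min hτ)
  simp only [hmap]
  by_cases he : p.2 = 1
  · simpa [he] using hd
  · simp only [he, ↓reduceIte]
    exact (hg p.1).sub hd

/-- vertex set of a finite complex. -/
def Vset {K : Set (Finset ι)} (hfin : K.Finite) : Finset ι := hfin.toFinset.sup id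

lemma Vset_spec {K : Set (Finset ι)} (hfin : K.Finite) : ∀ σ ∈ K, σ ⊆ Vset hfin :=
  fun σ hσ => Finset.le_sup (f := id) (hfin.mem_toFinset.2 hσ)

lemma subset_Vset {K : Set (Finset ι)} (hfin : K.Finite) {S : Finset (ι × Fin 2)}
    (hS : S ∈ boxProd K (Set.univ : Set (Finset (Fin 2)))) :
    S ⊆ (Vset hfin) ×ˢ (Finset.univ : Finset (Fin 2)) := by
  intro p hp
  rw [mem_product]
  exact ⟨Vset_spec hfin _ (mem_boxProd_univ.1 hS).1 (mem_image.2 ⟨p, hp, rfl⟩), mem_univ _⟩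

end Homotopy

end BoxAux


/-- **Example 5.2.2.** For a (finite) simplicial complex `K` with linearly ordered
vertices, the prism `K ⊠ Δ¹` collapses onto `K ⊠ {2}`; in particular `|K ⊠ {2}|` is a
deformation retract of `|K ⊠ Δ¹|`.  Here `Δ¹` is the full simplex on the two-point
ordered set (`Fin 2`), and `{2}` is its top vertex. -/
theorem boxProd_collapses_onto_top {ι : Type*} [LinearOrder ι]
    (K : Set (Finset ι)) (hfin : K.Finite) (hempty : ∅ ∈ K)
    (hdc : ∀ σ ∈ K, ∀ τ ⊆ σ, τ ∈ K) :
    Collapses (boxProd K (Set.univ : Set (Finset (Fin 2))))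
        (boxProd K {σ : Finset (Fin 2) | σ ⊆ {1}}) ∧
      ∃ H : C(↥(geomReal (boxProd K (Set.univ : Set (Finset (Fin 2))))) × unitInterval,
          ↥(geomReal (boxProd K (Set.univ : Set (Finset (Fin 2)))))),
        (∀ x, H (x, 0) = x) ∧
        (∀ x, (H (x, 1) : (ι × Fin 2) → ℝ) ∈
            geomReal (boxProd K {σ : Finset (Fin 2) | σ ⊆ {1}})) ∧
        (∀ x : ↥(geomReal (boxProd K (Set.univ : Set (Finset (Fin 2))))),
          (x : (ι × Fin 2) → ℝ) ∈ geomReal (boxProd K {σ : Finset (Fin 2) | σ ⊆ {1}}) →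
          ∀ t, H (x, t) = x) := by
  classical
  refine ⟨BoxAux.collapse_main hfin hdc, ?_⟩
  set V : Finset ι := BoxAux.Vset hfin with hV
  have hmem : ∀ (x : ↥(geomReal (boxProd K (Set.univ : Set (Finset (Fin 2))))))
      (t : unitInterval),
      BoxAux.hmap V (x : (ι × Fin 2) → ℝ) (t : ℝ) ∈
        geomReal (boxProd K (Set.univ : Set (Finset (Fin 2)))) := by
    rintro ⟨f, hf0, S, hSP, hvan, hsum⟩ t
    exact BoxAux.hmap_mem hdc hf0 hSP hvan hsum (BoxAux.subset_Vset hfin hSP) t.2.1 t.2.2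
  refine ⟨ContinuousMap.mk
    (fun z => ⟨BoxAux.hmap V (z.1 : (ι × Fin 2) → ℝ) (z.2 : ℝ), hmem z.1 z.2⟩) ?_, ?_, ?_, ?_⟩
  · apply Continuous.subtype_mk
    apply continuous_pi
    intro p
    exact (BoxAux.hmap_continuous V p).comp
      ((continuous_subtype_val.comp continuous_fst).prodMk
        (continuous_subtype_val.comp continuous_snd))
  · rintro ⟨f, hf0, S, hSP, hvan, hsum⟩
    apply Subtype.ext
    show BoxAux.hmap V f ((0 : unitInterval) : ℝ) = f
    rw [Set.Icc.coe_zero]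
    exact BoxAux.hmap_s_zero hf0 (BoxAux.mem_boxProd_univ.1 hSP).2 hvan (BoxAux.subset_Vset hfin hSP)
  · rintro ⟨f, hf0, S, hSP, hvan, hsum⟩
    show BoxAux.hmap V f ((1 : unitInterval) : ℝ) ∈ _
    rw [Set.Icc.coe_one]
    exact BoxAux.hmap_s_one_mem hdc hf0 hSP hvan hsum (BoxAux.subset_Vset hfin hSP)
  · rintro ⟨f, hf0, S, hSP, hvan, hsum⟩ hx t
    apply Subtype.ext
    show BoxAux.hmap V f (t : ℝ) = f
    obtain ⟨hf0', S', hS'P, hvan', hsum'⟩ := hx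
    exact BoxAux.hmap_fixed (BoxAux.Vset_spec hfin) hf0' hS'P hvan' hsum' _
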